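/- Let p and q be distinct prime numbers with p ≡ 3 (mod 4). Then there is no pair (w, z) ∈ ℚ_p × ℚ_p satisfying w² + 1 = pq·z⁴. -/

import Mathlib

section aux
variable {p : ℕ} [hp : Fact p.Prime]

lemma myval_eq_of_norm_eq {x y : ℚ_[p]} (hx : x ≠ 0) (hy : y ≠ 0) (h : ‖x‖ = ‖y‖) :
    x.valuation = y.valuation := by
  rw [Padic.norm_eq_zpow_neg_valuation hx, Padic.norm_eq_zpow_neg_valuation hy] at h
  have hinj := zpow_right_injective₀ (a := (p : ℝ))
    (by exact_mod_cast hp.out.pos) (by exact_mod_cast hp.out.ne_one)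
  have := hinj h
  omega

lemma myval_pow (x : ℚ_[p]) (hx : x ≠ 0) (n : ℕ) :
    (x ^ n).valuation = n * x.valuation := by
  induction n with
  | zero => simp [Padic.valuation_one]
  | succ n ih =>
    rw [pow_succ, Padic.valuation_mul (pow_ne_zero n hx) hx, ih]
    push_cast; ring

lemma myval_eq_zero_of_norm_one {x : ℚ_[p]} (hx : x ≠ 0) (h : ‖x‖ = 1) :
    x.valuation = 0 := by
  have h1 : ‖(1 : ℚ_[p])‖ = 1 := norm_one
  have := myval_eq_of_norm_eq hx (one_ne_zero) (h.trans h1.symm)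
  simpa [Padic.valuation_one] using this

end aux

theorem stmt4 (p q : ℕ) [hp : Fact p.Prime] (hq : q.Prime) (hpq : p ≠ q)
    (hp4 : p % 4 = 3) :
    ¬∃ w z : ℚ_[p], w ^ 2 + 1 = (p : ℚ_[p]) * (q : ℚ_[p]) * z ^ 4 := by
  rintro ⟨w, z, h⟩
  have hp0 : (p : ℚ_[p]) ≠ 0 := Nat.cast_ne_zero.mpr hp.out.pos.ne'
  have hq0 : (q : ℚ_[p]) ≠ 0 := Nat.cast_ne_zero.mpr hq.pos.ne'
  have hvq : (q : ℚ_[p]).valuation = 0 := by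
    rw [Padic.valuation_natCast]
    have : ¬ p ∣ q := fun hd => hpq ((Nat.prime_dvd_prime_iff_eq hp.out hq).mp hd)
    simp [padicValNat.eq_zero_of_not_dvd this]
  -- odd valuation of RHS when z ≠ 0
  have hrhs : ∀ hz : z ≠ 0, ((p : ℚ_[p]) * (q : ℚ_[p]) * z ^ 4).valuation
      = 1 + 4 * z.valuation := by
    intro hz
    rw [Padic.valuation_mul (mul_ne_zero hp0 hq0) (pow_ne_zero 4 hz),
      Padic.valuation_mul hp0 hq0, Padic.valuation_p, hvq, myval_pow z hz 4]
    push_cast; ring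
  rcases le_or_gt ‖w‖ 1 with hw | hw
  · -- w is a p-adic integer
    set W : ℤ_[p] := ⟨w, hw⟩ with hW
    have hle : ‖w ^ 2 + 1‖ ≤ 1 := by
      calc ‖w ^ 2 + 1‖ ≤ max ‖w ^ 2‖ ‖(1 : ℚ_[p])‖ := Padic.nonarchimedean _ _
        _ ≤ 1 := by
          simp only [norm_pow, norm_one, max_le_iff]
          exact ⟨pow_le_one₀ (norm_nonneg w) hw, le_rfl⟩
    rcases lt_or_eq_of_le hle with hlt | heq
    · -- norm < 1 : reduce mod p
      have hWnorm : ‖(W ^ 2 + 1 : ℤ_[p])‖ < 1 := by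
        have : ((W ^ 2 + 1 : ℤ_[p]) : ℚ_[p]) = w ^ 2 + 1 := by
          push_cast [hW]; rfl
        rw [PadicInt.norm_def, this]; exact hlt
      have hdvd : (p : ℤ_[p]) ∣ (W ^ 2 + 1) := (PadicInt.norm_lt_one_iff_dvd _).mp hWnorm
      obtain ⟨c, hc⟩ := hdvd
      have h0 : (PadicInt.toZMod (W ^ 2 + 1) : ZMod p) = 0 := by
        rw [hc, map_mul, map_natCast, ZMod.natCast_self, zero_mul]
      have hsq : (PadicInt.toZMod W) ^ 2 = -1 := by
        have := h0
        rw [map_add, map_pow, map_one] at this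
        linear_combination this
      have : IsSquare (-1 : ZMod p) := ⟨PadicInt.toZMod W, by rw [← hsq]; ring⟩
      exact (ZMod.exists_sq_eq_neg_one_iff.mp this) hp4
    · -- norm = 1
      have hne : w ^ 2 + 1 ≠ 0 := fun h0 => by simp [h0] at heq
      have hz : z ≠ 0 := by
        rintro rfl; exact hne (by rw [h]; ring)
      have hval0 : (w ^ 2 + 1).valuation = 0 := myval_eq_zero_of_norm_one hne heq
      have := hrhs hz
      rw [← h, hval0] at this
      omega
  · -- ‖w‖ > 1
    have hwne : w ≠ 0 := fun h0 => by simp [h0] at hw; exact absurd hw (by norm_num)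
    have hnorm : ‖w ^ 2 + 1‖ = ‖w ^ 2‖ := by
      rw [Padic.add_eq_max_of_ne, max_eq_left]
      · rw [norm_pow, norm_one]; exact le_of_lt (one_lt_pow₀ hw (by norm_num))
      · rw [norm_pow, norm_one]; exact ne_of_gt (one_lt_pow₀ hw (by norm_num))
    have hne : w ^ 2 + 1 ≠ 0 := by
      intro h0
      rw [h0, norm_zero] at hnorm
      have : ‖w ^ 2‖ > 0 := norm_pos_iff.mpr (pow_ne_zero 2 hwne)
      linarith
    have hz : z ≠ 0 := by
      rintro rfl; exact hne (by rw [h]; ring)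
    have hv : (w ^ 2 + 1).valuation = 2 * w.valuation := by
      rw [myval_eq_of_norm_eq hne (pow_ne_zero 2 hwne) hnorm, myval_pow w hwne 2]
      push_cast; ring
    have := hrhs hz
    rw [← h, hv] at this
    omega
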